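/- Let t₀ < t₁ be reals, let k₁, k₂ : [t₀, t₁] → ℝ be continuous with k₁(t) ≥ 0 and k₂(t) ≥ 0 for all t, and let α : [t₀, t₁] → ℝ be differentiable with α(t₀) > 0 and α'(t) ≥ 3·k₁(t)·k₂(t)·α(t) − k₁(t)·α(t)² for all t ∈ [t₀, t₁]. Then α(t) > 0 for all t ∈ [t₀, t₁], and moreover α(t) ≥ e^{∫_{t₀}^{t} 3k₁k₂ ds}·α(t₀) / ( 1 + α(t₀)·∫_{t₀}^{t} k₁(s)·e^{∫_{t₀}^{s} 3k₁k₂ dτ} ds ). -/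

import Mathlib

open intervalIntegral

/-- Riccati comparison: if `α' ≥ 3k₁k₂α − k₁α²` with nonnegative continuous
coefficients and `α(t₀) > 0`, then `α` stays positive and satisfies an explicit
lower bound. -/
theorem riccati_comparison (t₀ t₁ : ℝ) (ht : t₀ < t₁) (k₁ k₂ α : ℝ → ℝ)
    (hk₁c : ContinuousOn k₁ (Set.Icc t₀ t₁)) (hk₂c : ContinuousOn k₂ (Set.Icc t₀ t₁))
    (hk₁ : ∀ t ∈ Set.Icc t₀ t₁, 0 ≤ k₁ t) (hk₂ : ∀ t ∈ Set.Icc t₀ t₁, 0 ≤ k₂ t)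
    (hαdiff : ∀ t ∈ Set.Icc t₀ t₁, DifferentiableAt ℝ α t)
    (hα0 : 0 < α t₀)
    (hineq : ∀ t ∈ Set.Icc t₀ t₁,
      deriv α t ≥ 3 * k₁ t * k₂ t * α t - k₁ t * (α t) ^ 2) :
    ∀ t ∈ Set.Icc t₀ t₁, 0 < α t ∧
      α t ≥ Real.exp (∫ s in t₀..t, 3 * k₁ s * k₂ s) * α t₀ /
        (1 + α t₀ * ∫ s in t₀..t, k₁ s * Real.exp (∫ τ in t₀..s, 3 * k₁ τ * k₂ τ)) := by
  have hle := ht.le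
  -- continuous extension of coefficients to all of ℝ
  set p : ℝ → ℝ := fun t => max t₀ (min t t₁) with hp
  have hpc : Continuous p := continuous_const.max (continuous_id.min continuous_const)
  have hpmem : ∀ t, p t ∈ Set.Icc t₀ t₁ := fun t =>
    ⟨le_max_left _ _, max_le hle (min_le_right _ _)⟩
  have hpeq : ∀ t ∈ Set.Icc t₀ t₁, p t = t := by
    intro t ht'
    simp only [hp]
    rw [min_eq_left ht'.2, max_eq_right ht'.1]
  set K₁ : ℝ → ℝ := fun t => k₁ (p t) with hK₁d
  set K₂ : ℝ → ℝ := fun t => k₂ (p t) with hK₂d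
  have hK₁c : Continuous K₁ := hk₁c.comp_continuous hpc hpmem
  have hK₂c : Continuous K₂ := hk₂c.comp_continuous hpc hpmem
  have hK₁0 : ∀ t, 0 ≤ K₁ t := fun t => hk₁ _ (hpmem t)
  have hK₂0 : ∀ t, 0 ≤ K₂ t := fun t => hk₂ _ (hpmem t)
  have hK₁eq : ∀ t ∈ Set.Icc t₀ t₁, K₁ t = k₁ t := fun t ht' => by
    simp only [hK₁d, hpeq t ht']
  have hK₂eq : ∀ t ∈ Set.Icc t₀ t₁, K₂ t = k₂ t := fun t ht' => by
    simp only [hK₂d, hpeq t ht']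
  -- integrating factor
  set B : ℝ → ℝ := fun t => ∫ s in t₀..t, 3 * K₁ s * K₂ s with hBd
  set E : ℝ → ℝ := fun t => Real.exp (B t) with hEd
  have hBc : Continuous (fun s => 3 * K₁ s * K₂ s) :=
    (continuous_const.mul hK₁c).mul hK₂c
  have hBderiv : ∀ t, HasDerivAt B (3 * K₁ t * K₂ t) t := fun t =>
    intervalIntegral.integral_hasDerivAt_right (hBc.intervalIntegrable _ _)
      hBc.aestronglyMeasurable.stronglyMeasurableAtFilter hBc.continuousAt
  have hEderiv : ∀ t, HasDerivAt E (3 * K₁ t * K₂ t * E t) t := fun t => by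
    simpa [hEd, mul_comm] using (hBderiv t).exp
  have hEpos : ∀ t, 0 < E t := fun t => Real.exp_pos _
  have hEc : Continuous E := Real.continuous_exp.comp (by
    apply continuous_iff_continuousAt.2
    exact fun t => (hBderiv t).continuousAt)
  set g : ℝ → ℝ := fun t => ∫ s in t₀..t, K₁ s * E s with hgd
  have hgc : Continuous (fun s => K₁ s * E s) := hK₁c.mul hEc
  have hgderiv : ∀ t, HasDerivAt g (K₁ t * E t) t := fun t =>
    intervalIntegral.integral_hasDerivAt_right (hgc.intervalIntegrable _ _)
      hgc.aestronglyMeasurable.stronglyMeasurableAtFilter hgc.continuousAt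
  have hg0 : ∀ t, t₀ ≤ t → 0 ≤ g t := fun t htt => by
    simp only [hgd]
    exact intervalIntegral.integral_nonneg htt fun s _ => mul_nonneg (hK₁0 s) (hEpos s).le
  have hB0 : B t₀ = 0 := intervalIntegral.integral_same
  have hE0 : E t₀ = 1 := by simp [hEd, hB0]
  have hg00 : g t₀ = 0 := intervalIntegral.integral_same
  set β : ℝ → ℝ := fun t => E t * α t₀ / (1 + α t₀ * g t) with hβd
  have hDpos : ∀ t, t₀ ≤ t → 0 < 1 + α t₀ * g t := fun t htt => by
    have := hg0 t htt
    nlinarith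
  have hβpos : ∀ t, t₀ ≤ t → 0 < β t := fun t htt =>
    div_pos (mul_pos (hEpos t) hα0) (hDpos t htt)
  have hβca : ∀ t, t₀ ≤ t → ContinuousAt β t := by
    intro t htt
    exact (hEc.continuousAt.mul continuousAt_const).div
      (continuousAt_const.add (continuousAt_const.mul (hgderiv t).continuousAt))
      (hDpos t htt).ne'
  -- Step A: comparison while α is positive
  have stepA : ∀ t ∈ Set.Icc t₀ t₁, (∀ s ∈ Set.Icc t₀ t, 0 < α s) → β t ≤ α t := by
    intro t htm hpos
    set φ : ℝ → ℝ := fun s => 1 / α t₀ + g s - E s / α s with hφd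
    have hφmono : MonotoneOn φ (Set.Icc t₀ t) := by
      apply monotoneOn_of_deriv_nonneg (convex_Icc _ _)
      · apply ContinuousOn.sub
        · exact (continuous_const.add (by
            apply continuous_iff_continuousAt.2
            exact fun s => (hgderiv s).continuousAt)).continuousOn
        · apply ContinuousOn.div hEc.continuousOn
          · intro s hs
            exact ((hαdiff s ⟨hs.1, hs.2.trans htm.2⟩).continuousAt).continuousWithinAt
          · intro s hs; exact (hpos s hs).ne'
      · rw [interior_Icc]
        intro s hs
        have hsI : s ∈ Set.Icc t₀ t := ⟨hs.1.le, hs.2.le⟩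
        have hαs := hpos s hsI
        exact (((hgderiv s).const_add _).sub
          ((hEderiv s).div (hαdiff s ⟨hsI.1, hsI.2.trans htm.2⟩).hasDerivAt
            hαs.ne')).differentiableAt.differentiableWithinAt
      · rw [interior_Icc]
        intro s hs
        have hsI : s ∈ Set.Icc t₀ t := ⟨hs.1.le, hs.2.le⟩
        have hsI1 : s ∈ Set.Icc t₀ t₁ := ⟨hsI.1, hsI.2.trans htm.2⟩
        have hαs := hpos s hsI
        have hder : HasDerivAt φ
            (K₁ s * E s - (3 * K₁ s * K₂ s * E s * α s - E s * deriv α s) / (α s) ^ 2) s :=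
          ((hgderiv s).const_add _).sub
            ((hEderiv s).div (hαdiff s hsI1).hasDerivAt hαs.ne')
        rw [hder.deriv]
        have hin := hineq s hsI1
        rw [← hK₁eq s hsI1, ← hK₂eq s hsI1] at hin
        rw [sub_nonneg, div_le_iff₀ (by positivity)]
        have hE' := (hEpos s).le
        nlinarith [mul_nonneg (hK₁0 s) hE', mul_nonneg (mul_nonneg (hK₁0 s) hE') (sq_nonneg (α s))]
    have hφt₀ : φ t₀ = 0 := by
      simp [hφd, hg00, hE0]
    have h1 : φ t₀ ≤ φ t := hφmono (Set.left_mem_Icc.2 htm.1) (Set.mem_Icc.2 ⟨htm.1, le_refl t⟩) htm.1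
    rw [hφt₀] at h1
    -- from 0 ≤ 1/α₀ + g t - E t / α t derive β t ≤ α t
    have hαt := hpos t (Set.mem_Icc.2 ⟨htm.1, le_refl t⟩)
    have hD := hDpos t htm.1
    have hE' := hEpos t
    have h2 : E t / α t ≤ 1 / α t₀ + g t := by
      simp only [hφd] at h1; linarith
    rw [div_le_iff₀ hαt] at h2
    rw [hβd, div_le_iff₀ hD]
    have h4 : (1 / α t₀ + g t) * α t * α t₀ = α t * (1 + α t₀ * g t) := by
      field_simp
    nlinarith [mul_le_mul_of_nonneg_right h2 hα0.le]
  -- Step B: positivity everywhere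
  have hpos : ∀ t ∈ Set.Icc t₀ t₁, 0 < α t := by
    by_contra hcon
    push_neg at hcon
    obtain ⟨τ₀, hτ₀m, hτ₀⟩ := hcon
    set S : Set ℝ := {t ∈ Set.Icc t₀ t₁ | α t ≤ 0} with hSd
    have hSne : S.Nonempty := ⟨τ₀, hτ₀m, hτ₀⟩
    have hSbdd : BddBelow S := ⟨t₀, fun x hx => hx.1.1⟩
    have hαcont : ContinuousOn α (Set.Icc t₀ t₁) := fun s hs =>
      ((hαdiff s hs).continuousAt).continuousWithinAt
    have hSclosed : IsClosed S := by
      have : S = Set.Icc t₀ t₁ ∩ α ⁻¹' Set.Iic 0 := by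
        ext x; simp [hSd, Set.mem_setOf_eq, and_comm]
      rw [this]
      exact hαcont.preimage_isClosed_of_isClosed isClosed_Icc isClosed_Iic
    set τ := sInf S with hτd
    have hτS : τ ∈ S := hSclosed.csInf_mem hSne hSbdd
    have hτm : τ ∈ Set.Icc t₀ t₁ := hτS.1
    have hτ0 : α τ ≤ 0 := hτS.2
    have hτgt : t₀ < τ := by
      rcases lt_or_eq_of_le hτm.1 with h | h
      · exact h
      · exact absurd (h ▸ hτ0) (not_le.2 hα0)
    have hIpos : ∀ s ∈ Set.Ico t₀ τ, 0 < α s := by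
      intro s hs
      by_contra hc
      push_neg at hc
      have : s ∈ S := ⟨⟨hs.1, hs.2.le.trans hτm.2⟩, hc⟩
      exact absurd (csInf_le hSbdd this) (not_le.2 hs.2)
    have hIbound : ∀ s ∈ Set.Ico t₀ τ, β s ≤ α s := by
      intro s hs
      apply stepA s ⟨hs.1, hs.2.le.trans hτm.2⟩
      intro u hu
      exact hIpos u ⟨hu.1, lt_of_le_of_lt hu.2 hs.2⟩
    -- take limit s → τ⁻
    have hne : (nhdsWithin τ (Set.Ico t₀ τ)).NeBot := by
      apply mem_closure_iff_nhdsWithin_neBot.1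
      rw [closure_Ico hτgt.ne]
      exact Set.right_mem_Icc.2 hτgt.le
    have hlim : β τ ≤ α τ := by
      haveI := hne
      apply le_of_tendsto_of_tendsto
        ((hβca τ hτgt.le).continuousWithinAt (s := Set.Ico t₀ τ))
        (((hαdiff τ hτm).continuousAt).continuousWithinAt (s := Set.Ico t₀ τ))
      exact eventually_nhdsWithin_of_forall hIbound
    have := hβpos τ hτgt.le
    linarith
  -- conclusion
  intro t htm
  refine ⟨hpos t htm, ?_⟩
  have hb := stepA t htm fun s hs => hpos s ⟨hs.1, hs.2.trans htm.2⟩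
  -- rewrite β in terms of original k₁ k₂
  have hBe : B t = ∫ s in t₀..t, 3 * k₁ s * k₂ s := by
    apply intervalIntegral.integral_congr
    intro s hs
    rw [Set.uIcc_of_le htm.1] at hs
    have hs1 : s ∈ Set.Icc t₀ t₁ := ⟨hs.1, hs.2.trans htm.2⟩
    simp [hK₁eq s hs1, hK₂eq s hs1]
  have hge : g t = ∫ s in t₀..t, k₁ s * Real.exp (∫ τ in t₀..s, 3 * k₁ τ * k₂ τ) := by
    apply intervalIntegral.integral_congr
    intro s hs
    rw [Set.uIcc_of_le htm.1] at hs
    have hs1 : s ∈ Set.Icc t₀ t₁ := ⟨hs.1, hs.2.trans htm.2⟩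
    have hBs : B s = ∫ τ in t₀..s, 3 * k₁ τ * k₂ τ := by
      apply intervalIntegral.integral_congr
      intro u hu
      rw [Set.uIcc_of_le hs1.1] at hu
      have hu1 : u ∈ Set.Icc t₀ t₁ := ⟨hu.1, hu.2.trans hs1.2⟩
      simp [hK₁eq u hu1, hK₂eq u hu1]
    simp [hK₁eq s hs1, hEd, hBs]
  calc Real.exp (∫ s in t₀..t, 3 * k₁ s * k₂ s) * α t₀ /
        (1 + α t₀ * ∫ s in t₀..t, k₁ s * Real.exp (∫ τ in t₀..s, 3 * k₁ τ * k₂ τ))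
      = β t := by rw [hβd]; simp only [hEd, hBe, hge]
    _ ≤ α t := hb
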